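/- Let g ≥ 1 and let π be a group generated by 2g elements α₁,…,α_g,β₁,…,β_g such that the abelianization of π is a free abelian group of rank 2g, and such that the element ∏_{j=1}^g [α_j,β_j] lies in the center of π. Then the second group homology H₂(π;ℚ) with trivial rational coefficients is nonzero. -/

import Mathlib

/-!
STATEMENT 3: Let `g ≥ 1` and let `π` be a group generated by `2g` elements
`α₁,…,α_g,β₁,…,β_g` such that the abelianization of `π` is free abelian of rank
`2g`, and such that `∏ⱼ [αⱼ,βⱼ]` lies in the center of `π`.  Then the second
group homology `H₂(π;ℚ)` with trivial rational coefficients is nonzero.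

Since this version of Mathlib does not contain group homology, we define
`H₂(G;ℚ)` (trivial coefficients) directly as the homology in degree 2 of the
standard inhomogeneous bar complex
`⋯ → ℚ[G³] →d₃ ℚ[G²] →d₂ ℚ[G] → ⋯`, where
`d₂(g₁,g₂) = (g₂) - (g₁g₂) + (g₁)` and
`d₃(g₁,g₂,g₃) = (g₂,g₃) - (g₁g₂,g₃) + (g₁,g₂g₃) - (g₁,g₂)`.
-/

/-- The bar-complex differential `d₂ : ℚ[G²] → ℚ[G]` for trivial coefficients. -/
noncomputable def barD2 (G : Type) [Group G] : ((G × G) →₀ ℚ) →ₗ[ℚ] (G →₀ ℚ) :=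
  Finsupp.linearCombination ℚ fun p : G × G =>
    Finsupp.single p.2 (1 : ℚ) - Finsupp.single (p.1 * p.2) 1 + Finsupp.single p.1 1

/-- The bar-complex differential `d₃ : ℚ[G³] → ℚ[G²]` for trivial coefficients. -/
noncomputable def barD3 (G : Type) [Group G] : ((G × G × G) →₀ ℚ) →ₗ[ℚ] ((G × G) →₀ ℚ) :=
  Finsupp.linearCombination ℚ fun t : G × G × G =>
    Finsupp.single (t.2.1, t.2.2) (1 : ℚ) - Finsupp.single (t.1 * t.2.1, t.2.2) 1
      + Finsupp.single (t.1, t.2.1 * t.2.2) 1 - Finsupp.single (t.1, t.2.1) 1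

/-- The second group homology `H₂(G;ℚ)` of `G` with trivial coefficients in `ℚ`,
defined as `ker d₂ / im d₃` in the bar complex. -/
noncomputable def groupHomology2Q (G : Type) [Group G] : Type :=
  LinearMap.ker (barD2 G) ⧸
    (LinearMap.range (barD3 G)).comap (LinearMap.ker (barD2 G)).subtype

noncomputable instance (G : Type) [Group G] : AddCommGroup (groupHomology2Q G) := by
  unfold groupHomology2Q; infer_instance

noncomputable instance (G : Type) [Group G] : Module ℚ (groupHomology2Q G) := by
  unfold groupHomology2Q; infer_instance

open scoped commutatorElement

/-- If every 2-cycle is a boundary, then every 2-cocycle is a coboundary. -/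
lemma exists_primitive {π : Type} [Group π]
    (hz : ∀ x ∈ LinearMap.ker (barD2 π), x ∈ LinearMap.range (barD3 π))
    (f : π → π → ℚ)
    (hf : ∀ a b c : π, f b c - f (a * b) c + f a (b * c) - f a b = 0) :
    ∃ ψ : π → ℚ, ∀ a b : π, f a b = ψ b - ψ (a * b) + ψ a := by
  set F : ((π × π) →₀ ℚ) →ₗ[ℚ] ℚ :=
    Finsupp.linearCombination ℚ (fun p : π × π => f p.1 p.2) with hF
  have hcomp : F ∘ₗ barD3 π = 0 := by
    apply Finsupp.lhom_ext
    intro t r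
    have : (barD3 π) (Finsupp.single t r)
        = r • (Finsupp.single (t.2.1, t.2.2) (1 : ℚ) - Finsupp.single (t.1 * t.2.1, t.2.2) 1
          + Finsupp.single (t.1, t.2.1 * t.2.2) 1 - Finsupp.single (t.1, t.2.1) 1) := by
      simp [barD3, Finsupp.linearCombination_single]
    simp only [LinearMap.comp_apply, this, map_smul, map_sub, map_add, hF,
      Finsupp.linearCombination_single, one_smul, LinearMap.zero_apply, smul_eq_mul]
    have := hf t.1 t.2.1 t.2.2
    linear_combination r * this
  have hker : LinearMap.ker (barD2 π) ≤ LinearMap.ker F := by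
    intro x hx
    obtain ⟨y, hy⟩ := hz x hx
    have : F x = (F ∘ₗ barD3 π) y := by rw [LinearMap.comp_apply, hy]
    rw [LinearMap.mem_ker, this, hcomp]; rfl
  set Fbar := Submodule.liftQ (LinearMap.ker (barD2 π)) F hker with hFbar
  set G : LinearMap.range (barD2 π) →ₗ[ℚ] ℚ :=
    Fbar ∘ₗ ((barD2 π).quotKerEquivRange.symm : _ →ₗ[ℚ] _) with hG
  obtain ⟨φ, hφ⟩ := G.exists_extend
  have key : ∀ x : (π × π) →₀ ℚ, φ ((barD2 π) x) = F x := by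
    intro x
    have h1 : (barD2 π) x ∈ LinearMap.range (barD2 π) := LinearMap.mem_range_self _ x
    have h2 : φ ((barD2 π) x) = G ⟨(barD2 π) x, h1⟩ := by
      rw [← hφ]; rfl
    rw [h2, hG, LinearMap.comp_apply]
    have h3 : (barD2 π).quotKerEquivRange.symm ⟨(barD2 π) x, h1⟩
        = (LinearMap.ker (barD2 π)).mkQ x := (barD2 π).quotKerEquivRange_symm_apply_image x h1
    simp only [LinearEquiv.coe_coe]
    rw [h3]
    simp [hFbar, Submodule.mkQ_apply]
  refine ⟨fun a => φ (Finsupp.single a 1), fun a b => ?_⟩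
  have h4 : (barD2 π) (Finsupp.single (a, b) (1 : ℚ))
      = Finsupp.single b (1 : ℚ) - Finsupp.single (a * b) 1 + Finsupp.single a 1 := by
    simp [barD2, Finsupp.linearCombination_single]
  have h5 := key (Finsupp.single (a, b) 1)
  rw [h4] at h5
  simp only [map_add, map_sub, hF, Finsupp.linearCombination_single, one_smul] at h5
  linarith [h5]

section CocycleAlgebra

variable {π : Type} [Group π] {u v ψ : π → ℚ}

lemma hom_one (hu : ∀ x y : π, u (x * y) = u x + u y) : u 1 = 0 := by
  have := hu 1 1; simpa using this.symm

lemma hom_inv (hu : ∀ x y : π, u (x * y) = u x + u y) (x : π) : u x⁻¹ = -u x := by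
  have h := hu x x⁻¹
  rw [mul_inv_cancel, hom_one hu] at h
  linarith

lemma psi_one (hu : ∀ x y : π, u (x * y) = u x + u y)
    (hψ : ∀ a b : π, u a * v b = ψ b - ψ (a * b) + ψ a) : ψ 1 = 0 := by
  have := hψ 1 1
  rw [hom_one hu, one_mul] at this
  linarith

lemma psi_mul (hψ : ∀ a b : π, u a * v b = ψ b - ψ (a * b) + ψ a) (a b : π) :
    ψ (a * b) = ψ a + ψ b - u a * v b := by
  have := hψ a b; linarith

lemma psi_inv (hu : ∀ x y : π, u (x * y) = u x + u y)
    (hv : ∀ x y : π, v (x * y) = v x + v y)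
    (hψ : ∀ a b : π, u a * v b = ψ b - ψ (a * b) + ψ a) (x : π) :
    ψ x⁻¹ = -ψ x - u x * v x := by
  have h := psi_mul hψ x x⁻¹
  rw [mul_inv_cancel, psi_one hu hψ, hom_inv hv] at h
  linarith

lemma psi_comm (hu : ∀ x y : π, u (x * y) = u x + u y)
    (hv : ∀ x y : π, v (x * y) = v x + v y)
    (hψ : ∀ a b : π, u a * v b = ψ b - ψ (a * b) + ψ a) (a b : π) :
    ψ ⁅a, b⁆ = u b * v a - u a * v b := by
  have hc : ⁅a, b⁆ = a * b * a⁻¹ * b⁻¹ := rfl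
  rw [hc, psi_mul hψ (a * b * a⁻¹) b⁻¹, psi_mul hψ (a * b) a⁻¹, psi_mul hψ a b,
    psi_inv hu hv hψ a, psi_inv hu hv hψ b]
  simp only [hu, hom_inv hu, hom_inv hv]
  ring

lemma hom_comm (hu : ∀ x y : π, u (x * y) = u x + u y) (a b : π) : u ⁅a, b⁆ = 0 := by
  have hc : ⁅a, b⁆ = a * b * a⁻¹ * b⁻¹ := rfl
  rw [hc, hu, hu, hu, hom_inv hu, hom_inv hu]
  ring

lemma hom_prod (hu : ∀ x y : π, u (x * y) = u x + u y) :
    ∀ l : List π, u l.prod = (l.map u).sum := by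
  intro l
  induction l with
  | nil => simpa using hom_one hu
  | cons x t ih => simp [hu, ih]

lemma psi_prod (hu : ∀ x y : π, u (x * y) = u x + u y)
    (hψ : ∀ a b : π, u a * v b = ψ b - ψ (a * b) + ψ a) :
    ∀ l : List π, (∀ x ∈ l, u x = 0) → ψ l.prod = (l.map ψ).sum := by
  intro l
  induction l with
  | nil => intro _; simpa using psi_one hu hψ
  | cons x t ih =>
    intro h
    have hx : u x = 0 := h x List.mem_cons_self
    have ht : ∀ y ∈ t, u y = 0 := fun y hy => h y (List.mem_cons_of_mem x hy)
    simp only [List.prod_cons, List.map_cons, List.sum_cons]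
    rw [psi_mul hψ, ih ht, hx]
    ring

end CocycleAlgebra


theorem H2_nonzero_of_surface_like_group (g : ℕ) (hg : 1 ≤ g)
    (π : Type) [Group π] (α β : Fin g → π)
    (hgen : Subgroup.closure (Set.range α ∪ Set.range β) = ⊤)
    (hab : Nonempty (Abelianization π ≃* Multiplicative (Fin (2 * g) → ℤ)))
    (hcentral : (List.ofFn fun j : Fin g => ⁅α j, β j⁆).prod ∈ Subgroup.center π) :
    Nontrivial (groupHomology2Q π) := by
  by_contra hnt
  have hsub : Subsingleton ((LinearMap.ker (barD2 π)) ⧸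
      ((LinearMap.range (barD3 π)).comap (LinearMap.ker (barD2 π)).subtype)) := by
    have := not_nontrivial_iff_subsingleton.mp hnt
    exact this
  have htop := Submodule.Quotient.subsingleton_iff.mp hsub
  have hz : ∀ x ∈ LinearMap.ker (barD2 π), x ∈ LinearMap.range (barD3 π) := by
    intro x hx
    have hmem : (⟨x, hx⟩ : LinearMap.ker (barD2 π)) ∈
        (LinearMap.range (barD3 π)).comap (LinearMap.ker (barD2 π)).subtype := by
      rw [htop]; trivial
    simpa using hmem
  -- characters
  obtain ⟨e⟩ := hab
  set c : π →* Multiplicative (Fin (2 * g) → ℤ) := e.toMonoidHom.comp Abelianization.of with hc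
  have hcsurj : Function.Surjective c := by
    intro y
    obtain ⟨z, hze⟩ := e.surjective y
    obtain ⟨x, hx⟩ := Quot.exists_rep z
    refine ⟨x, ?_⟩
    have : Abelianization.of x = z := by rw [← Abelianization.mk_eq_of, hx]
    simp [hc, this, hze]
  set T : π → (Fin (2 * g) → ℚ) := fun x i => ((Multiplicative.toAdd (c x)) i : ℚ) with hTdef
  have hT : ∀ x y : π, T (x * y) = T x + T y := by
    intro x y
    funext i
    simp only [hTdef, map_mul, toAdd_mul, Pi.add_apply]
    push_cast
    ring
  set E : (Fin g ⊕ Fin g) → (Fin (2 * g) → ℚ) :=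
    Sum.elim (fun j => T (α j)) (fun j => T (β j)) with hEdef
  have hall : ∀ m : Multiplicative (Fin (2 * g) → ℤ),
      (fun i => ((Multiplicative.toAdd m) i : ℚ)) ∈ Submodule.span ℚ (Set.range E) := by
    have hcl : Subgroup.closure (⇑c '' (Set.range α ∪ Set.range β)) = ⊤ := by
      rw [← MonoidHom.map_closure, hgen, Subgroup.map_top_of_surjective c hcsurj]
    intro m
    have hm : m ∈ Subgroup.closure (⇑c '' (Set.range α ∪ Set.range β)) := by
      rw [hcl]; trivial
    induction hm using Subgroup.closure_induction with
    | mem x hx =>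
      obtain ⟨x0, hx0, rfl⟩ := hx
      rcases hx0 with ⟨j, rfl⟩ | ⟨j, rfl⟩
      · exact Submodule.subset_span ⟨Sum.inl j, rfl⟩
      · exact Submodule.subset_span ⟨Sum.inr j, rfl⟩
    | one =>
      have : (fun i => (((Multiplicative.toAdd (1 : Multiplicative (Fin (2 * g) → ℤ)))) i : ℚ))
          = 0 := by funext i; simp
      rw [this]; exact Submodule.zero_mem _
    | mul x y hx hy ihx ihy =>
      have : (fun i => ((Multiplicative.toAdd (x * y)) i : ℚ))
          = (fun i => ((Multiplicative.toAdd x) i : ℚ)) + (fun i => ((Multiplicative.toAdd y) i : ℚ)) := by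
        funext i; simp [toAdd_mul]
      rw [this]; exact Submodule.add_mem _ ihx ihy
    | inv x hx ihx =>
      have : (fun i => ((Multiplicative.toAdd x⁻¹) i : ℚ))
          = -(fun i => ((Multiplicative.toAdd x) i : ℚ)) := by
        funext i; simp
      rw [this]; exact Submodule.neg_mem _ ihx
  have hspan : ⊤ ≤ Submodule.span ℚ (Set.range E) := by
    rw [← (Pi.basisFun ℚ (Fin (2 * g))).span_eq]
    apply Submodule.span_le.mpr
    rintro x ⟨i, rfl⟩
    rw [Pi.basisFun_apply]
    have := hall (Multiplicative.ofAdd (Pi.single i (1 : ℤ) : Fin (2 * g) → ℤ))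
    have heq : (fun k => (((Multiplicative.toAdd (Multiplicative.ofAdd (Pi.single i (1 : ℤ) : Fin (2 * g) → ℤ))) k : ℤ) : ℚ))
        = Pi.single i (1 : ℚ) := by
      funext k
      by_cases h : k = i <;> simp [Pi.single_apply, h]
    rwa [heq] at this
  have hcard : Fintype.card (Fin g ⊕ Fin g) = Module.finrank ℚ (Fin (2 * g) → ℚ) := by
    simp [Module.finrank_fintype_fun_eq_card, two_mul]
  set B := basisOfTopLeSpanOfCardEqFinrank E hspan hcard with hBdef
  have hBE : ∀ s, B s = E s := fun s =>
    congrFun (coe_basisOfTopLeSpanOfCardEqFinrank E hspan hcard) s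
  have hcoord : ∀ s t, B.coord s (E t) = if t = s then 1 else 0 := by
    intro s t
    rw [← hBE, Module.Basis.coord_apply, B.repr_self, Finsupp.single_apply]
  set i₀ : Fin g := ⟨0, hg⟩ with hi₀
  set u : π → ℚ := fun x => B.coord (Sum.inl i₀) (T x) with hudef
  set v : π → ℚ := fun x => B.coord (Sum.inr i₀) (T x) with hvdef
  have hu : ∀ x y : π, u (x * y) = u x + u y := by
    intro x y; simp [hudef, hT, map_add]
  have hv : ∀ x y : π, v (x * y) = v x + v y := by
    intro x y; simp [hvdef, hT, map_add]
  have huα : ∀ j, u (α j) = if j = i₀ then 1 else 0 := by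
    intro j
    have : u (α j) = B.coord (Sum.inl i₀) (E (Sum.inl j)) := rfl
    rw [this, hcoord]
    simp [Sum.inl.injEq]
  have hvα : ∀ j, v (α j) = 0 := by
    intro j
    have : v (α j) = B.coord (Sum.inr i₀) (E (Sum.inl j)) := rfl
    rw [this, hcoord]
    simp
  have huβ : ∀ j, u (β j) = 0 := by
    intro j
    have : u (β j) = B.coord (Sum.inl i₀) (E (Sum.inr j)) := rfl
    rw [this, hcoord]
    simp
  have hvβ : ∀ j, v (β j) = if j = i₀ then 1 else 0 := by
    intro j
    have : v (β j) = B.coord (Sum.inr i₀) (E (Sum.inr j)) := rfl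
    rw [this, hcoord]
    simp [Sum.inr.injEq]
  -- first two cocycles
  obtain ⟨ψ, hψ0⟩ := exists_primitive hz (fun a b => u a * v b)
    (by intro a b c
        show u b * v c - u (a * b) * v c + u a * v (b * c) - u a * v b = 0
        rw [hu, hv]; ring)
  have hψ : ∀ a b : π, u a * v b = ψ b - ψ (a * b) + ψ a := hψ0
  obtain ⟨ψ', hψ0'⟩ := exists_primitive hz (fun a b => v a * u b)
    (by intro a b c
        show v b * u c - v (a * b) * u c + v a * u (b * c) - v a * u b = 0
        rw [hv, hu]; ring)
  have hψ' : ∀ a b : π, v a * u b = ψ' b - ψ' (a * b) + ψ' a := hψ0'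
  -- Massey-type cocycle
  obtain ⟨χ, hχ0⟩ := exists_primitive hz (fun a b => ψ a * u b + u a * ψ' b) (by
    intro a b c
    show (ψ b * u c + u b * ψ' c) - (ψ (a * b) * u c + u (a * b) * ψ' c)
      + (ψ a * u (b * c) + u a * ψ' (b * c)) - (ψ a * u b + u a * ψ' b) = 0
    have h1 := hψ a b
    have h2 := hψ' b c
    have h3 := hu a b
    have h4 := hu b c
    linear_combination (-(u c)) * h1 + u a * h2 + (-(ψ' c)) * h3 + ψ a * h4)
  have hχ : ∀ a b : π, ψ a * u b + u a * ψ' b = χ b - χ (a * b) + χ a := hχ0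
  -- the central element
  set r : π := (List.ofFn fun j : Fin g => ⁅α j, β j⁆).prod with hrdef
  have hulist : ∀ x ∈ (List.ofFn fun j : Fin g => ⁅α j, β j⁆), u x = 0 := by
    intro x hx
    rw [List.mem_ofFn] at hx
    obtain ⟨j, rfl⟩ := hx
    exact hom_comm hu _ _
  have hvlist : ∀ x ∈ (List.ofFn fun j : Fin g => ⁅α j, β j⁆), v x = 0 := by
    intro x hx
    rw [List.mem_ofFn] at hx
    obtain ⟨j, rfl⟩ := hx
    exact hom_comm hv _ _
  have hur : u r = 0 := by
    rw [hrdef, hom_prod hu]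
    exact List.sum_eq_zero (by
      intro x hx
      rw [List.mem_map] at hx
      obtain ⟨y, hy, rfl⟩ := hx
      exact hulist y hy)
  have hψr : ψ r = -1 := by
    rw [hrdef, psi_prod hu hψ _ hulist, List.map_ofFn, List.sum_ofFn]
    have hterm : ∀ j : Fin g, ψ ⁅α j, β j⁆ = if j = i₀ then (-1 : ℚ) else 0 := by
      intro j
      rw [psi_comm hu hv hψ, huα, hvα, huβ, hvβ]
      by_cases h : j = i₀ <;> simp [h]
    calc (∑ j : Fin g, ((fun x => ψ x) ∘ fun j : Fin g => ⁅α j, β j⁆) j)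
        = ∑ j : Fin g, if j = i₀ then (-1 : ℚ) else 0 := by
          apply Finset.sum_congr rfl; intro j _; exact hterm j
      _ = -1 := by rw [Finset.sum_ite_eq']; simp
  have hψ'r : ψ' r = 1 := by
    rw [hrdef, psi_prod hv hψ' _ hvlist, List.map_ofFn, List.sum_ofFn]
    have hterm : ∀ j : Fin g, ψ' ⁅α j, β j⁆ = if j = i₀ then (1 : ℚ) else 0 := by
      intro j
      rw [psi_comm hv hu hψ', huα, hvα, huβ, hvβ]
      by_cases h : j = i₀ <;> simp [h]
    calc (∑ j : Fin g, ((fun x => ψ' x) ∘ fun j : Fin g => ⁅α j, β j⁆) j)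
        = ∑ j : Fin g, if j = i₀ then (1 : ℚ) else 0 := by
          apply Finset.sum_congr rfl; intro j _; exact hterm j
      _ = 1 := by rw [Finset.sum_ite_eq']; simp
  -- centrality gives the contradiction
  have hcomm : α i₀ * r = r * α i₀ := Subgroup.mem_center_iff.mp hcentral (α i₀)
  have h1 := hχ r (α i₀)
  have h2 := hχ (α i₀) r
  rw [hcomm] at h2
  have hx1 : u (α i₀) = 1 := by rw [huα]; simp
  have : ψ r * u (α i₀) + u r * ψ' (α i₀) = ψ (α i₀) * u r + u (α i₀) * ψ' r := by
    linarith [h1, h2]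
  rw [hur, hx1, hψr, hψ'r] at this
  norm_num at this
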